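/- The distant graph G(R,Δ) of the projective line over a finite ring R with unity is connected with diameter at most 2. -/

import Mathlib

open Matrix

/-- The cyclic left submodule `R(a,b)` of `R²`. -/
def ptSub (R : Type*) [Ring R] (a b : R) : Submodule R (Fin 2 → R) :=
  Submodule.span R {![a, b]}

/-- The right action of an invertible matrix `g` on submodules of `R²`, via `v ↦ v ᵥ* g`. -/
def mulGL (R : Type*) [Ring R] (g : (Matrix (Fin 2) (Fin 2) R)ˣ)
    (p : Submodule R (Fin 2 → R)) : Submodule R (Fin 2 → R) :=
  p.map (Matrix.vecMulLinear g.val)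

/-- The projective line over `R`: the orbit of `R(1,0)` under `GL₂(R)`. -/
def projLine (R : Type*) [Ring R] : Set (Submodule R (Fin 2 → R)) :=
  {p | ∃ g, mulGL R g (ptSub R 1 0) = p}

/-- The distant relation: the orbit of the pair `(R(1,0), R(0,1))` under `GL₂(R)`. -/
def IsDistant (R : Type*) [Ring R] (p q : Submodule R (Fin 2 → R)) : Prop :=
  ∃ g, mulGL R g (ptSub R 1 0) = p ∧ mulGL R g (ptSub R 0 1) = q


universe u

section FiniteMonoid

variable {G : Type*} [Monoid G] [Finite G]

/-- In a finite monoid, a left inverse makes an element a unit. -/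
lemma isUnit_of_left_inv {a b : G} (h : b * a = 1) : IsUnit a := by
  have hinj : Function.Injective (fun x : G => a * x) := by
    intro x y hxy
    have h2 := congrArg (fun z => b * z) hxy
    simpa [← mul_assoc, h] using h2
  obtain ⟨c, hc⟩ := (Finite.injective_iff_surjective.mp hinj) 1
  simp only at hc
  have hbc : b = c := by
    calc b = b * (a * c) := by rw [hc, mul_one]
    _ = (b * a) * c := by rw [mul_assoc]
    _ = c := by rw [h, one_mul]
  exact ⟨⟨a, c, hc, by rw [← hbc, h]⟩, rfl⟩

/-- In a finite monoid, every element has an idempotent positive power. -/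
lemma exists_idempotent_pow (a : G) : ∃ N : ℕ, 0 < N ∧ a ^ N * a ^ N = a ^ N := by
  obtain ⟨m', n', hne, hmn⟩ := Finite.exists_ne_map_eq_of_infinite (fun k : ℕ => a ^ k)
  -- wlog m < n
  obtain ⟨m, k, hk, hper⟩ : ∃ m k : ℕ, 0 < k ∧ a ^ (m + k) = a ^ m := by
    rcases lt_or_gt_of_ne hne with h | h
    · exact ⟨m', n' - m', by omega, by rw [show m' + (n' - m') = n' by omega, hmn]⟩
    · exact ⟨n', m' - n', by omega, by rw [show n' + (m' - n') = m' by omega, ← hmn]⟩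
  have base : ∀ s, a ^ (m + k + s) = a ^ (m + s) := by
    intro s
    have h3 : a ^ (m + k + s) = a ^ (m + k) * a ^ s := pow_add a _ _
    rw [h3, hper, ← pow_add]
  have key : ∀ j s, a ^ (m + j * k + s) = a ^ (m + s) := by
    intro j
    induction j with
    | zero => simp
    | succ j ih =>
      intro s
      have : m + (j + 1) * k + s = m + k + (j * k + s) := by ring
      rw [this, base, show m + (j * k + s) = m + j * k + s by ring, ih]
  refine ⟨(m + 1) * k, by positivity, ?_⟩
  rw [← pow_add]
  have h2 : (m + 1) * k + (m + 1) * k = m + (m + 1) * k + ((m + 1) * k - m) := by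
    have : m + 1 ≤ (m + 1) * k := Nat.le_mul_of_pos_right _ hk
    omega
  rw [h2, key]
  congr 1
  have : m + 1 ≤ (m + 1) * k := Nat.le_mul_of_pos_right _ hk
  omega

end FiniteMonoid

/-- Left stable range one. -/
def LSR1 (R : Type u) [Ring R] : Prop :=
  ∀ a b : R, (∃ x y : R, x * a + y * b = 1) → ∃ t : R, IsUnit (a + t * b)

section Subst

variable {R : Type u} [Ring R]

/-- The substitution property for a module, phrased via split surjections. -/
def Subst (R : Type u) [Ring R] (M : Type u) [AddCommGroup M] [Module R M] : Prop :=
  ∀ (X : Type u) [AddCommGroup X] [Module R X]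
    (π₁ π₂ : X →ₗ[R] M) (σ₁ σ₂ : M →ₗ[R] X),
    π₁ ∘ₗ σ₁ = LinearMap.id → π₂ ∘ₗ σ₂ = LinearMap.id →
    ∃ σ : M →ₗ[R] X, IsUnit (π₁ ∘ₗ σ : Module.End R M) ∧ IsUnit (π₂ ∘ₗ σ : Module.End R M)

variable {M : Type u} [AddCommGroup M] [Module R M]

/-- If `End M` has (right) stable range one then `M` has substitution. -/
lemma subst_of_end
    (H : ∀ a w d : Module.End R M, a * w + d = 1 → ∃ t, IsUnit (a + d * t)) :
    Subst R M := by
  intro X _ _ π₁ π₂ σ₁ σ₂ h₁ h₂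
  set a : Module.End R M := π₂ ∘ₗ σ₁ with ha
  set w : Module.End R M := π₁ ∘ₗ σ₂ with hw
  obtain ⟨t, ht⟩ := H a w (1 - a * w) (by abel)
  refine ⟨σ₁ + (σ₂ - σ₁ ∘ₗ w) ∘ₗ t, ?_, ?_⟩
  · have : (π₁ ∘ₗ (σ₁ + (σ₂ - σ₁ ∘ₗ w) ∘ₗ t) : Module.End R M) = 1 := by
      ext v
      have e1 : π₁ (σ₁ v) = v := congrArg (fun f => f v) h₁
      have e2 : ∀ z, π₁ (σ₂ z) = w z := fun z => rfl
      simp only [LinearMap.comp_apply, LinearMap.add_apply, LinearMap.sub_apply, map_add, map_sub,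
        Module.End.one_apply]
      rw [show π₁ (σ₁ v) = v from e1,
        show π₁ (σ₁ (w (t v))) = w (t v) from congrArg (fun f => f (w (t v))) h₁]
      simp [e2]
    rw [this]; exact isUnit_one
  · have : (π₂ ∘ₗ (σ₁ + (σ₂ - σ₁ ∘ₗ w) ∘ₗ t) : Module.End R M) = a + (1 - a * w) * t := by
      ext v
      have e2 : π₂ (σ₂ (t v)) = t v := congrArg (fun f => f (t v)) h₂
      simp only [LinearMap.comp_apply, LinearMap.add_apply, LinearMap.sub_apply, map_add, map_sub,
        Module.End.mul_apply, Module.End.one_apply]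
      rw [e2]
      rfl
    rw [this]; exact ht

/-- Substitution transports along linear isomorphism. -/
lemma Subst.congr {M' : Type u} [AddCommGroup M'] [Module R M'] (e : M ≃ₗ[R] M')
    (h : Subst R M) : Subst R M' := by
  intro X _ _ π₁ π₂ σ₁ σ₂ h₁ h₂
  obtain ⟨σ, hu₁, hu₂⟩ := h X (e.symm.toLinearMap ∘ₗ π₁) (e.symm.toLinearMap ∘ₗ π₂)
      (σ₁ ∘ₗ e.toLinearMap) (σ₂ ∘ₗ e.toLinearMap)
      (by ext v
          have := congrArg (fun f => f (e v)) h₁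
          simp only [LinearMap.comp_apply, LinearMap.id_apply] at this ⊢
          simp only [LinearEquiv.coe_coe]
          rw [this, LinearEquiv.symm_apply_apply])
      (by ext v
          have := congrArg (fun f => f (e v)) h₂
          simp only [LinearMap.comp_apply, LinearMap.id_apply] at this ⊢
          simp only [LinearEquiv.coe_coe]
          rw [this, LinearEquiv.symm_apply_apply])
  refine ⟨σ ∘ₗ e.symm.toLinearMap, ?_, ?_⟩
  · rw [Module.End.isUnit_iff] at hu₁ ⊢
    have : ⇑(π₁ ∘ₗ σ ∘ₗ e.symm.toLinearMap)
        = ⇑e ∘ ⇑(e.symm.toLinearMap ∘ₗ π₁ ∘ₗ σ) ∘ ⇑e.symm.toLinearMap := by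
      funext v; simp
    rw [this]
    exact (e.bijective.comp hu₁).comp e.symm.bijective
  · rw [Module.End.isUnit_iff] at hu₂ ⊢
    have : ⇑(π₂ ∘ₗ σ ∘ₗ e.symm.toLinearMap)
        = ⇑e ∘ ⇑(e.symm.toLinearMap ∘ₗ π₂ ∘ₗ σ) ∘ ⇑e.symm.toLinearMap := by
      funext v; simp
    rw [this]
    exact (e.bijective.comp hu₂).comp e.symm.bijective

end Subst

variable {R : Type u} [Ring R]

section Blocks

variable {M₁ M₂ : Type u} [AddCommGroup M₁] [Module R M₁] [AddCommGroup M₂] [Module R M₂]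

lemma surj_of_blocks (F : Module.End R (M₁ × M₂)) (u : M₁ →ₗ[R] M₁) (β : M₂ →ₗ[R] M₁)
    (γ : M₁ →ₗ[R] M₂) (δ : M₂ →ₗ[R] M₂) (u' : Module.End R M₁)
    (hF : ∀ x : M₁ × M₂, F x = (u x.1 + β x.2, γ x.1 + δ x.2))
    (hu' : ∀ z, u (u' z) = z)
    (hv : ∀ z₂ : M₂, ∃ y, δ y - γ (u' (β y)) = z₂) :
    Function.Surjective F := by
  intro z
  obtain ⟨y, hy⟩ := hv (z.2 - γ (u' z.1))
  refine ⟨(u' (z.1 - β y), y), ?_⟩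
  rw [hF]
  have c1 : u (u' (z.1 - β y)) + β y = z.1 := by rw [hu']; abel
  have c2 : γ (u' (z.1 - β y)) + δ y = z.2 := by
    have : γ (u' (z.1 - β y)) = γ (u' z.1) - γ (u' (β y)) := by
      rw [map_sub, map_sub]
    rw [this]
    have : γ (u' z.1) - γ (u' (β y)) + δ y = γ (u' z.1) + (δ y - γ (u' (β y))) := by abel
    rw [this, hy]; abel
  ext <;> simp only [c1, c2]

lemma subst_prod [Finite M₁] [Finite M₂] (hs₁ : Subst R M₁) (hs₂ : Subst R M₂) :
    Subst R (M₁ × M₂) := by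
  intro X _ _ π₁ π₂ σ₁ σ₂ h₁ h₂
  have happ₁ : ∀ x, π₁ (σ₁ x) = x := fun x => congrArg (fun f => f x) h₁
  have happ₂ : ∀ x, π₂ (σ₂ x) = x := fun x => congrArg (fun f => f x) h₂
  -- Step 1 : handle the M₁ component
  obtain ⟨σ', hu₁, hu₂⟩ := hs₁ X
      (LinearMap.fst R M₁ M₂ ∘ₗ π₁) (LinearMap.fst R M₁ M₂ ∘ₗ π₂)
      (σ₁ ∘ₗ LinearMap.inl R M₁ M₂) (σ₂ ∘ₗ LinearMap.inl R M₁ M₂)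
      (by ext x; simp [happ₁]) (by ext x; simp [happ₂])
  set u₁ : Module.End R M₁ := LinearMap.fst R M₁ M₂ ∘ₗ π₁ ∘ₗ σ' with hu₁def
  set u₂ : Module.End R M₁ := LinearMap.fst R M₁ M₂ ∘ₗ π₂ ∘ₗ σ' with hu₂def
  have hu₁' : IsUnit u₁ := hu₁
  have hu₂' : IsUnit u₂ := hu₂
  let U₁ := hu₁'.unit; let U₂ := hu₂'.unit
  let v₁ : Module.End R M₁ := ↑U₁⁻¹; let v₂ : Module.End R M₁ := ↑U₂⁻¹
  have hU₁ : ∀ z, u₁ (v₁ z) = z := by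
    intro z
    have hsp : (U₁ : Module.End R M₁) = u₁ := hu₁'.unit_spec
    rw [← hsp]
    show ((U₁ : Module.End R M₁) * ↑U₁⁻¹) z = z
    rw [U₁.mul_inv, Module.End.one_apply]
  have hU₂ : ∀ z, u₂ (v₂ z) = z := by
    intro z
    have hsp : (U₂ : Module.End R M₁) = u₂ := hu₂'.unit_spec
    rw [← hsp]
    show ((U₂ : Module.End R M₁) * ↑U₂⁻¹) z = z
    rw [U₂.mul_inv, Module.End.one_apply]
  -- Step 2 : handle the M₂ component
  let Q₁ : X →ₗ[R] X := LinearMap.id - σ' ∘ₗ v₁ ∘ₗ (LinearMap.fst R M₁ M₂ ∘ₗ π₁)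
  let Q₂ : X →ₗ[R] X := LinearMap.id - σ' ∘ₗ v₂ ∘ₗ (LinearMap.fst R M₁ M₂ ∘ₗ π₂)
  let ρ₁ : X →ₗ[R] M₂ := LinearMap.snd R M₁ M₂ ∘ₗ π₁ ∘ₗ Q₁
  let ρ₂ : X →ₗ[R] M₂ := LinearMap.snd R M₁ M₂ ∘ₗ π₂ ∘ₗ Q₂
  obtain ⟨τ, hv₁, hv₂⟩ := hs₂ X ρ₁ ρ₂
      (Q₁ ∘ₗ σ₁ ∘ₗ LinearMap.inr R M₁ M₂) (Q₂ ∘ₗ σ₂ ∘ₗ LinearMap.inr R M₁ M₂)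
      (by
        ext y
        simp only [LinearMap.comp_apply, LinearMap.inr_apply, LinearMap.id_apply,
          LinearMap.sub_apply, ρ₁, Q₁, LinearMap.fst_apply, LinearMap.snd_apply,
          LinearMap.id_coe, id_eq, map_sub, happ₁]
        simp)
      (by
        ext y
        simp only [LinearMap.comp_apply, LinearMap.inr_apply, LinearMap.id_apply,
          LinearMap.sub_apply, ρ₂, Q₂, LinearMap.fst_apply, LinearMap.snd_apply,
          LinearMap.id_coe, id_eq, map_sub, happ₂]
        simp)
  -- Step 3 : assemble
  refine ⟨σ'.coprod τ, ?_, ?_⟩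
  · rw [Module.End.isUnit_iff]
    rw [Finite.injective_iff_bijective.symm.trans Finite.injective_iff_surjective]
    refine surj_of_blocks _ u₁ (LinearMap.fst R M₁ M₂ ∘ₗ π₁ ∘ₗ τ)
      (LinearMap.snd R M₁ M₂ ∘ₗ π₁ ∘ₗ σ') (LinearMap.snd R M₁ M₂ ∘ₗ π₁ ∘ₗ τ) v₁ ?_ hU₁ ?_
    · intro x
      simp only [LinearMap.comp_apply, LinearMap.coprod_apply, map_add, hu₁def,
        LinearMap.fst_apply, LinearMap.snd_apply]
      ext <;> simp
    · intro z₂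
      have hsurj : Function.Surjective (ρ₁ ∘ₗ τ : Module.End R M₂) :=
        (Module.End.isUnit_iff _).mp hv₁ |>.2
      obtain ⟨y, hy⟩ := hsurj z₂
      refine ⟨y, ?_⟩
      simp only [LinearMap.comp_apply, ρ₁, Q₁, LinearMap.sub_apply, LinearMap.id_apply,
        LinearMap.fst_apply, LinearMap.snd_apply, map_sub] at hy ⊢
      exact hy
  · rw [Module.End.isUnit_iff]
    rw [Finite.injective_iff_bijective.symm.trans Finite.injective_iff_surjective]
    refine surj_of_blocks _ u₂ (LinearMap.fst R M₁ M₂ ∘ₗ π₂ ∘ₗ τ)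
      (LinearMap.snd R M₁ M₂ ∘ₗ π₂ ∘ₗ σ') (LinearMap.snd R M₁ M₂ ∘ₗ π₂ ∘ₗ τ) v₂ ?_ hU₂ ?_
    · intro x
      simp only [LinearMap.comp_apply, LinearMap.coprod_apply, map_add, hu₂def,
        LinearMap.fst_apply, LinearMap.snd_apply]
      ext <;> simp
    · intro z₂
      have hsurj : Function.Surjective (ρ₂ ∘ₗ τ : Module.End R M₂) :=
        (Module.End.isUnit_iff _).mp hv₂ |>.2
      obtain ⟨y, hy⟩ := hsurj z₂
      refine ⟨y, ?_⟩
      simp only [LinearMap.comp_apply, ρ₂, Q₂, LinearMap.sub_apply, LinearMap.id_apply,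
        LinearMap.fst_apply, LinearMap.snd_apply, map_sub] at hy ⊢
      exact hy

end Blocks

section Top
universe v
open MulOpposite in
/-- Substitution for a corner module `Re`. -/
lemma subst_corner {R : Type v} [Ring R] [Finite R] (e : R) (he : e * e = e) (hne : e ≠ 1)
    (IH : ∀ (S : Type v) [Ring S] [Finite S], Nat.card S < Nat.card R → LSR1 S) :
    Subst R ↥(LinearMap.range (LinearMap.toSpanSingleton R R e)) := by
  set re := LinearMap.toSpanSingleton R R e with hre
  set Me := LinearMap.range re with hMe
  have hmem : e ∈ Me := ⟨1, by simp [hre]⟩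
  have hfinE : Finite (Module.End R ↥Me) :=
    Finite.of_injective (fun f => (f : ↥Me → ↥Me)) DFunLike.coe_injective
  set Φ : Module.End R ↥Me → R := fun φ => (φ ⟨e, hmem⟩ : ↥Me).1 with hΦ
  have hΦinj : Function.Injective Φ := by
    intro φ ψ hfe
    ext ⟨z, hz⟩
    obtain ⟨r, hr⟩ := hz
    have hz' : (⟨z, ⟨r, hr⟩⟩ : ↥Me) = r • (⟨e, hmem⟩ : ↥Me) := by
      apply Subtype.ext
      simp only [SetLike.mk_smul_mk, smul_eq_mul]
      rw [← hr]; simp [hre, LinearMap.toSpanSingleton_apply, smul_eq_mul]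
    rw [hz', _root_.map_smul, _root_.map_smul]
    have : φ ⟨e, hmem⟩ = ψ ⟨e, hmem⟩ := Subtype.ext hfe
    rw [this]
  have hΦnot : (1 : R) ∉ Set.range Φ := by
    rintro ⟨φ, hφ⟩
    have h1 : (⟨e, hmem⟩ : ↥Me) = e • (⟨e, hmem⟩ : ↥Me) := by
      apply Subtype.ext; simp [smul_eq_mul, he]
    have h2 : Φ φ = e * Φ φ := by
      conv_lhs => rw [hΦ]
      simp only
      conv_lhs => rw [h1, _root_.map_smul]
      rfl
    rw [hφ, mul_one] at h2
    exact hne h2.symm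
  have hcard : Nat.card (Module.End R ↥Me) < Nat.card R := by
    have := Fintype.ofFinite R
    have := Fintype.ofFinite (Module.End R ↥Me)
    rw [Nat.card_eq_fintype_card, Nat.card_eq_fintype_card]
    exact Fintype.card_lt_of_injective_of_notMem Φ hΦinj hΦnot
  have hfinEop : Finite (Module.End R ↥Me)ᵐᵒᵖ :=
    Finite.of_equiv _ (MulOpposite.opEquiv (α := Module.End R ↥Me))
  have hL : LSR1 (Module.End R ↥Me)ᵐᵒᵖ := by
    refine IH _ ?_
    have : Nat.card (Module.End R ↥Me)ᵐᵒᵖ = Nat.card (Module.End R ↥Me) :=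
      Nat.card_congr (MulOpposite.opEquiv (α := Module.End R ↥Me)).symm
    omega
  apply subst_of_end
  intro a w d hrel
  obtain ⟨t', ht'⟩ := hL (op a) (op d) ⟨op w, 1, by
    rw [one_mul, ← op_mul, ← op_add, hrel, op_one]⟩
  refine ⟨t'.unop, ?_⟩
  have hop : op a + t' * op d = op (a + d * t'.unop) := by
    rw [op_add, op_mul, op_unop]
  rw [hop] at ht'
  exact isUnit_op.mp ht'

/-- A finite ring whose substitution property holds for the regular module has
left stable range one. -/
lemma lsr1_of_subst (R : Type v) [Ring R] [Finite R] (hsub : Subst R R) : LSR1 R := by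
  rintro a b ⟨x, y, hxy⟩
  obtain ⟨σ, hU₁, hU₂⟩ := hsub (R × R)
    ((LinearMap.toSpanSingleton R R a).coprod (LinearMap.toSpanSingleton R R b))
    (LinearMap.fst R R R)
    ((LinearMap.toSpanSingleton R R x).prod (LinearMap.toSpanSingleton R R y))
    (LinearMap.inl R R R)
    (by
      ext r
      simp only [LinearMap.comp_apply, LinearMap.prod_apply, Function.prod,
        LinearMap.coprod_apply, LinearMap.toSpanSingleton_apply, smul_eq_mul,
        LinearMap.id_apply]
      rw [mul_assoc, mul_assoc, ← mul_add, hxy, mul_one])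
    (by ext r; simp)
  set c₁ := (σ 1).1 with hc₁def
  set c₂ := (σ 1).2 with hc₂def
  have hσ : ∀ m : R, σ m = (m * c₁, m * c₂) := by
    intro m
    have h1 : σ m = m • σ 1 := by rw [← _root_.map_smul, smul_eq_mul, mul_one]
    rw [h1]
    apply Prod.ext <;> simp [smul_eq_mul, hc₁def, hc₂def]
  have hc₁ : IsUnit c₁ := by
    obtain ⟨m, hm⟩ := ((Module.End.isUnit_iff _).mp hU₂).2 1
    have : m * c₁ = 1 := by
      simpa [LinearMap.comp_apply, hσ m] using hm
    exact isUnit_of_left_inv this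
  have hz : IsUnit (c₁ * a + c₂ * b) := by
    obtain ⟨m, hm⟩ := ((Module.End.isUnit_iff _).mp hU₁).2 1
    have : m * (c₁ * a + c₂ * b) = 1 := by
      simpa [LinearMap.comp_apply, hσ m, LinearMap.coprod_apply,
        LinearMap.toSpanSingleton_apply, smul_eq_mul, mul_add, mul_assoc] using hm
    exact isUnit_of_left_inv this
  obtain ⟨u₁, hu₁⟩ := hc₁
  refine ⟨↑u₁⁻¹ * c₂, ?_⟩
  have key : a + (↑u₁⁻¹ * c₂) * b = ↑u₁⁻¹ * (c₁ * a + c₂ * b) := by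
    rw [mul_add, ← mul_assoc, ← mul_assoc, ← hu₁, Units.inv_mul, one_mul]
  rw [key]
  exact (Units.isUnit u₁⁻¹).mul hz

theorem lsr1_finite_aux : ∀ (n : ℕ) (R : Type v) [Ring R] [Finite R], Nat.card R = n → LSR1 R := by
  intro n
  induction n using Nat.strong_induction_on with
  | _ n IHn =>
    intro R _ _ hn
    by_cases hex : ∃ e : R, e * e = e ∧ e ≠ 0 ∧ e ≠ 1
    · obtain ⟨e, hee, he0, he1⟩ := hex
      have IH : ∀ (S : Type v) [Ring S] [Finite S], Nat.card S < Nat.card R → LSR1 S := by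
        intro S _ _ hS
        exact IHn (Nat.card S) (hn ▸ hS) S rfl
      have hff : (1 - e) * (1 - e) = 1 - e := by
        have h1 : (1 - e) * (1 - e) = 1 - e - e + e * e := by noncomm_ring
        rw [h1, hee]; abel
      have hf1 : (1 : R) - e ≠ 1 := by
        intro h
        apply he0
        have := sub_eq_self.mp h -- ?
        simpa using this
      have hsub₁ := subst_corner e hee he1 IH
      have hsub₂ := subst_corner (1 - e) hff hf1 IH
      have hprod := subst_prod hsub₁ hsub₂
      set re := LinearMap.toSpanSingleton R R e with hre
      set rf := LinearMap.toSpanSingleton R R (1 - e) with hrf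
      set Me := LinearMap.range re
      set Mf := LinearMap.range rf
      -- the isomorphism R ≃ₗ Me × Mf
      let fwd : R →ₗ[R] ↥Me × ↥Mf :=
        (re.codRestrict Me (fun r => LinearMap.mem_range_self re r)).prod
          (rf.codRestrict Mf (fun r => LinearMap.mem_range_self rf r))
      let bwd : ↥Me × ↥Mf →ₗ[R] R := (Me.subtype).coprod (Mf.subtype)
      have hgf : bwd ∘ₗ fwd = LinearMap.id := by
        ext r
        simp only [LinearMap.comp_apply, LinearMap.id_apply, bwd, fwd,
          LinearMap.prod_apply, Function.prod, LinearMap.coprod_apply,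
          Submodule.coe_subtype, LinearMap.codRestrict_apply,
          LinearMap.toSpanSingleton_apply, smul_eq_mul, hre, hrf]
        noncomm_ring
      have hfg : fwd ∘ₗ bwd = LinearMap.id := by
        apply LinearMap.ext
        rintro ⟨⟨z, r, hr⟩, ⟨w, s, hs⟩⟩
        simp only [hre, hrf, LinearMap.toSpanSingleton_apply, smul_eq_mul] at hr hs
        have hze : z * e = z := by rw [← hr]; rw [mul_assoc, hee]
        have hzf : z * (1 - e) = 0 := by rw [← hr, mul_assoc, mul_sub, mul_one, hee, sub_self, mul_zero]
        have hwe : w * e = 0 := by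
          rw [← hs, mul_assoc, sub_mul, one_mul, hee, sub_self, mul_zero]
        have hwf : w * (1 - e) = w := by rw [← hs, mul_assoc, hff]
        simp only [LinearMap.comp_apply, LinearMap.id_apply, bwd, fwd,
          LinearMap.prod_apply, Function.prod, LinearMap.coprod_apply,
          Submodule.coe_subtype, LinearMap.codRestrict_apply]
        refine Prod.ext (Subtype.ext ?_) (Subtype.ext ?_)
        · simp only [LinearMap.codRestrict_apply, hre, LinearMap.toSpanSingleton_apply,
            smul_eq_mul]
          rw [add_mul, hze, hwe, add_zero]
        · simp only [LinearMap.codRestrict_apply, hrf, LinearMap.toSpanSingleton_apply,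
            smul_eq_mul]
          rw [add_mul, hzf, hwf, zero_add]
      let iso : (↥Me × ↥Mf) ≃ₗ[R] R := LinearEquiv.ofLinear bwd fwd hgf hfg
      exact lsr1_of_subst R (Subst.congr iso hprod)
    · push_neg at hex
      rintro a b ⟨x, y, hxy⟩
      obtain ⟨K, hK, hidem⟩ := exists_idempotent_pow (x * a)
      have hcases : (x * a) ^ K = 0 ∨ (x * a) ^ K = 1 := by
        by_cases h0 : (x * a) ^ K = 0
        · exact Or.inl h0
        · exact Or.inr (hex _ hidem h0)
      rcases hcases with h0 | h1
      · have hgeom : (∑ i ∈ Finset.range K, (x * a) ^ i) * (1 - x * a) = 1 := by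
          have hg := geom_sum_mul (x * a) K
          rw [h0] at hg
          have h2 : (∑ i ∈ Finset.range K, (x * a) ^ i) * (1 - x * a)
              = -((∑ i ∈ Finset.range K, (x * a) ^ i) * (x * a - 1)) := by noncomm_ring
          rw [h2, hg]; simp
        have hyb : y * b = 1 - x * a := eq_sub_of_add_eq' hxy
        have hub : IsUnit (y * b) := by rw [hyb]; exact isUnit_of_left_inv hgeom
        obtain ⟨u, hu⟩ := hub
        have hb1 : ((↑u⁻¹ : R) * y) * b = 1 := by
          rw [mul_assoc, ← hu, Units.inv_mul]
        have hb : IsUnit b := isUnit_of_left_inv hb1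
        obtain ⟨v, hv⟩ := hb
        refine ⟨(1 - a) * ↑v⁻¹, ?_⟩
        have : a + (1 - a) * ↑v⁻¹ * b = 1 := by
          rw [mul_assoc, ← hv, Units.inv_mul, mul_one]; abel
        rw [this]; exact isUnit_one
      · have hleft : ((x * a) ^ (K - 1) * x) * a = 1 := by
          rw [mul_assoc, ← pow_succ, show K - 1 + 1 = K by omega, h1]
        exact ⟨0, by simpa using isUnit_of_left_inv hleft⟩

theorem lsr1_finite (R : Type v) [Ring R] [Finite R] : LSR1 R :=
  lsr1_finite_aux (Nat.card R) R rfl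

end Top

section Geometry

variable {R : Type*} [Ring R]

lemma vecMul_apply2 (v : Fin 2 → R) (M : Matrix (Fin 2) (Fin 2) R) (j : Fin 2) :
    (v ᵥ* M) j = v 0 * M 0 j + v 1 * M 1 j := by
  simp [Matrix.vecMul, dotProduct, Fin.sum_univ_two]

lemma row0_vecMul (M : Matrix (Fin 2) (Fin 2) R) : ![(1 : R), 0] ᵥ* M = M 0 := by
  funext j; rw [vecMul_apply2]; simp

lemma row1_vecMul (M : Matrix (Fin 2) (Fin 2) R) : ![(0 : R), 1] ᵥ* M = M 1 := by
  funext j; rw [vecMul_apply2]; simp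

lemma mulGL_span (g : (Matrix (Fin 2) (Fin 2) R)ˣ) (v : Fin 2 → R) :
    mulGL R g (Submodule.span R {v}) = Submodule.span R {v ᵥ* g.val} := by
  unfold mulGL
  rw [Submodule.map_span, Set.image_singleton, Matrix.vecMulLinear_apply]

lemma mulGL_mul (g h : (Matrix (Fin 2) (Fin 2) R)ˣ) (p : Submodule R (Fin 2 → R)) :
    mulGL R (g * h) p = mulGL R h (mulGL R g p) := by
  unfold mulGL
  rw [← Submodule.map_comp]
  congr 1
  apply LinearMap.ext
  intro v
  simp only [LinearMap.comp_apply, Matrix.vecMulLinear_apply, Units.val_mul,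
    ← Matrix.vecMul_vecMul]

lemma mulGL_pt10 (g : (Matrix (Fin 2) (Fin 2) R)ˣ) :
    mulGL R g (ptSub R 1 0) = Submodule.span R {g.val 0} := by
  show mulGL R g (Submodule.span R {![1, 0]}) = _
  rw [mulGL_span, row0_vecMul]

lemma mulGL_pt01 (g : (Matrix (Fin 2) (Fin 2) R)ˣ) :
    mulGL R g (ptSub R 0 1) = Submodule.span R {g.val 1} := by
  show mulGL R g (Submodule.span R {![0, 1]}) = _
  rw [mulGL_span, row1_vecMul]

lemma mul_apply2 (M N : Matrix (Fin 2) (Fin 2) R) (i j : Fin 2) :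
    (M * N) i j = M i 0 * N 0 j + M i 1 * N 1 j := by
  simp [Matrix.mul_apply, Fin.sum_univ_two]

end Geometry

/-- The distant graph `G(R,Δ)` is connected with diameter at most `2`:
any two distinct points are distant or have a common distant neighbour. -/
theorem distant_graph_connected_diam_le_two {R : Type*} [Ring R] [Fintype R]
    (p q : Submodule R (Fin 2 → R)) (hp : p ∈ projLine R) (hq : q ∈ projLine R)
    (hpq : p ≠ q) :
    IsDistant R p q ∨ ∃ r ∈ projLine R, IsDistant R p r ∧ IsDistant R r q := by
  
  right
  obtain ⟨A, hA⟩ := hp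
  obtain ⟨B, hB⟩ := hq
  set C : (Matrix (Fin 2) (Fin 2) R)ˣ := B * A⁻¹ with hCdef
  set Cm : Matrix (Fin 2) (Fin 2) R := C.val with hCm
  have hrel : C⁻¹.val 1 1 * Cm 1 1 + C⁻¹.val 1 0 * Cm 0 1 = 1 := by
    have h1 : (C⁻¹.val * Cm) = (1 : Matrix (Fin 2) (Fin 2) R) := by
      rw [hCm, ← Units.val_mul]; simp
    have h2 := congrArg (fun m : Matrix (Fin 2) (Fin 2) R => m 1 1) h1
    simp only [Matrix.mul_apply, Fin.sum_univ_two, Matrix.one_apply_eq] at h2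
    rw [add_comm]; exact h2
  obtain ⟨t, hu⟩ := lsr1_finite R (Cm 1 1) (Cm 0 1) ⟨C⁻¹.val 1 1, C⁻¹.val 1 0, hrel⟩
  set w0 : R := t * Cm 0 0 + Cm 1 0 with hw0
  set w1 : R := t * Cm 0 1 + Cm 1 1 with hw1
  obtain ⟨U, hU⟩ := hu
  have hUw : (U : R) = w1 := by rw [hU, hw1]; exact add_comm _ _
  have hUUi : ∀ z : R, (U : R) * ((↑U⁻¹ : R) * z) = z := by
    intro z; rw [← mul_assoc, Units.mul_inv, one_mul]
  -- the three matrices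
  have hS : (!![(0:R),1;1,0] * !![(0:R),1;1,0]) = 1 := by
    ext i j
    fin_cases i <;> fin_cases j <;>
      simp [Matrix.mul_apply, Fin.sum_univ_two, Matrix.one_apply]
  let S : (Matrix (Fin 2) (Fin 2) R)ˣ := ⟨!![0,1;1,0], !![0,1;1,0], hS, hS⟩
  let E : (Matrix (Fin 2) (Fin 2) R)ˣ :=
    ⟨!![1,0;t,1], !![1,0;-t,1],
      by
        ext i j
        fin_cases i <;> fin_cases j <;>
          simp [Matrix.mul_apply, Fin.sum_univ_two, Matrix.one_apply],
      by
        ext i j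
        fin_cases i <;> fin_cases j <;>
          simp [Matrix.mul_apply, Fin.sum_univ_two, Matrix.one_apply]⟩
  let N : (Matrix (Fin 2) (Fin 2) R)ˣ :=
    ⟨!![1,0;w0,w1], !![1,0; -(↑U⁻¹*w0), ↑U⁻¹],
      by
        ext i j
        fin_cases i <;> fin_cases j <;>
          simp [Matrix.mul_apply, Fin.sum_univ_two, Matrix.one_apply]
        · rw [← hUw, hUUi]; simp
        · exact hUw.symm,
      by
        ext i j
        fin_cases i <;> fin_cases j <;>
          simp [Matrix.mul_apply, Fin.sum_univ_two, Matrix.one_apply]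
        exact hUw⟩
  -- row computations
  have hSrow0 : (S.val) 0 = ![(0:R),1] := by
    funext j; fin_cases j <;> simp [S]
  have hSrow1 : (S.val) 1 = ![(1:R),0] := by
    funext j; fin_cases j <;> simp [S]
  have hNrow0 : (N.val) 0 = ![(1:R),0] := by
    funext j; fin_cases j <;> simp [N]
  have hNrow1 : (N.val) 1 = ![w0,w1] := by
    funext j; fin_cases j <;> simp [N]
  have hMval : ((E * C).val) = E.val * Cm := by rw [Units.val_mul, hCm]
  have hMrow0 : ((E * C).val) 0 = Cm 0 := by
    rw [hMval]; funext j
    simp [Matrix.mul_apply, Fin.sum_univ_two, E]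
  have hMrow1 : ((E * C).val) 1 = ![w0,w1] := by
    rw [hMval]; funext j
    fin_cases j <;> simp [Matrix.mul_apply, Fin.sum_univ_two, E, hw0, hw1]
  have hBCA : C * A = B := by rw [hCdef, inv_mul_cancel_right]
  -- the common neighbour
  refine ⟨mulGL R (N * A) (ptSub R 0 1), ⟨S * (N * A), ?_⟩, ⟨N * A, ?_, rfl⟩,
    ⟨S * (E * C * A), ?_, ?_⟩⟩
  · -- r is on the projective line
    rw [mulGL_mul, mulGL_pt10, hSrow0]
    rfl
  · -- p is distant from r : first row of N*A spans p
    rw [mulGL_mul, mulGL_pt10, hNrow0]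
    show mulGL R A (ptSub R 1 0) = p
    exact hA
  · -- first row of S*(E*C*A) spans r
    rw [mulGL_mul, mulGL_pt10, hSrow0]
    show mulGL R (E * C * A) (ptSub R 0 1) = _
    rw [show E * C * A = (E * C) * A from rfl, mulGL_mul, mulGL_pt01, hMrow1,
      mulGL_mul, mulGL_pt01, hNrow1]
  · -- second row of S*(E*C*A) spans q
    rw [mulGL_mul, mulGL_pt01, hSrow1]
    show mulGL R (E * C * A) (ptSub R 1 0) = q
    rw [show E * C * A = (E * C) * A from rfl, mulGL_mul, mulGL_pt10, hMrow0]
    rw [← hBCA, mulGL_mul, mulGL_pt10] at hB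
    exact hB
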